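/- Suppose 0 < F(x) ≤ c < ∞ for all x > 0 and limsup_{x→∞} F(x) < 1. Then every positive solution (A_n)_{n≥−m} of A_{n+1} = A_n·F(A_{n−m}) is bounded from above, i.e. limsup_{n→∞} A_n < ∞. -/

import Mathlib

open Filter

/-- Boundedness from above: under boundedness of `F` and `limsup_{x→∞} F(x) < 1`,
every positive solution of `A_{n+1} = A_n F(A_{n-m})` satisfies
`limsup_{n→∞} A_n < ∞`. -/
theorem stmt_1 (m : ℕ) (F : ℝ → ℝ) (c : ℝ)
    (hFc : ∀ x : ℝ, 0 < x → 0 < F x ∧ F x ≤ c)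
    (hcont : ContinuousOn F (Set.Ioi (0 : ℝ)))
    (hsup : Filter.limsup F Filter.atTop < 1)
    (A : ℤ → ℝ)
    (hApos : ∀ n : ℤ, -(m : ℤ) ≤ n → 0 < A n)
    (hArec : ∀ n : ℤ, 0 ≤ n → A (n + 1) = A n * F (A (n - m))) :
    Filter.limsup (fun n => (A n : EReal)) Filter.atTop < ⊤ := by
  -- F is eventually < 1
  have hbd : IsBoundedUnder (· ≤ ·) atTop F := by
    refine isBoundedUnder_of_eventually_le (a := c) ?_
    filter_upwards [eventually_gt_atTop (0 : ℝ)] with x hx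
    exact (hFc x hx).2
  have hev : ∀ᶠ x in atTop, F x < 1 := eventually_lt_of_limsup_lt hsup hbd
  obtain ⟨M, hM⟩ := eventually_atTop.mp hev
  set M0 : ℝ := max M 1 with hM0
  have hM0pos : (0:ℝ) < M0 := lt_of_lt_of_le one_pos (le_max_right _ _)
  have hM0lt : ∀ x : ℝ, M0 ≤ x → F x < 1 := fun x hx =>
    hM x (le_trans (le_max_left _ _) hx)
  set c' : ℝ := max c 1 with hc'
  have hc'1 : (1:ℝ) ≤ c' := le_max_right _ _
  have hc'pos : (0:ℝ) < c' := lt_of_lt_of_le one_pos hc'1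
  have hFc' : ∀ x : ℝ, 0 < x → F x ≤ c' := fun x hx =>
    le_trans (hFc x hx).2 (le_max_left _ _)
  set B : ℝ := M0 * c' ^ (m + 1) with hB
  -- Key estimate: for n ≥ m, A (n+1) ≤ c'^(m+1) * A (n - m)
  have key : ∀ n : ℤ, (m : ℤ) ≤ n → A (n + 1) ≤ c' ^ (m + 1) * A (n - m) := by
    intro n hn
    have hstep : ∀ j : ℕ, (j : ℤ) ≤ (m : ℤ) + 1 →
        A (n - m + j) ≤ c' ^ j * A (n - m) := by
      intro j
      induction j with
      | zero => intro _; simp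
      | succ j ih =>
        intro hj
        have hj' : (j : ℤ) ≤ (m : ℤ) + 1 := by push_cast at hj ⊢; linarith
        have hj0 : (0:ℤ) ≤ (j:ℤ) := Int.natCast_nonneg j
        have hk : (0:ℤ) ≤ n - m + j := by linarith
        have hkm : -(m : ℤ) ≤ n - m + j - m := by
          have : (0:ℤ) ≤ n - m := by linarith
          linarith
        have hrec := hArec (n - m + j) hk
        have hApos1 : 0 < A (n - m + j) := hApos _ (by linarith)
        have hApos2 : 0 < A (n - m + j - m) := hApos _ hkm
        have hFle : F (A (n - m + j - m)) ≤ c' := hFc' _ hApos2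
        have h1 : A (n - m + j + 1) ≤ A (n - m + j) * c' := by
          rw [hrec]
          exact mul_le_mul_of_nonneg_left hFle hApos1.le
        have h2 : A (n - m + j) * c' ≤ (c' ^ j * A (n - m)) * c' :=
          mul_le_mul_of_nonneg_right (ih hj') hc'pos.le
        have hcast : n - (m:ℤ) + (j + 1 : ℕ) = n - m + j + 1 := by push_cast; ring
        rw [hcast]
        calc A (n - m + j + 1) ≤ (c' ^ j * A (n - m)) * c' := le_trans h1 h2
          _ = c' ^ (j + 1) * A (n - m) := by ring
    have := hstep (m + 1) (by push_cast; linarith)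
    have hcast : n - (m:ℤ) + ((m : ℕ) + 1 : ℕ) = n + 1 := by push_cast; ring
    rwa [hcast] at this
  -- If A (n+1) > B then A (n+1) < A n, hence A (n+1) ≤ max B (A n)
  have step : ∀ n : ℤ, (m : ℤ) ≤ n → A (n + 1) ≤ max B (A n) := by
    intro n hn
    by_cases h : A (n + 1) ≤ B
    · exact le_trans h (le_max_left _ _)
    · push_neg at h
      have hkey := key n hn
      have hcpow : (0:ℝ) < c' ^ (m + 1) := pow_pos hc'pos _
      have hAnm : M0 < A (n - m) := by
        have : M0 * c' ^ (m + 1) < c' ^ (m + 1) * A (n - m) := by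
          calc M0 * c' ^ (m + 1) = B := rfl
            _ < A (n + 1) := h
            _ ≤ c' ^ (m + 1) * A (n - m) := hkey
        nlinarith
      have hFlt : F (A (n - m)) < 1 := hM0lt _ hAnm.le
      have hApos1 : 0 < A n := hApos n (by linarith)
      have : A (n + 1) < A n := by
        rw [hArec n (by linarith)]
        nlinarith
      exact le_trans this.le (le_max_right _ _)
  -- Hence A n ≤ max B (A m) for all n ≥ m
  have bound : ∀ n : ℤ, (m : ℤ) ≤ n → A n ≤ max B (A m) := by
    intro n hn
    refine Int.leInduction (motive := fun k _ => A k ≤ max B (A (m:ℤ))) (le_max_right _ _) ?_ n hn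
    intro n hn ih
    exact le_trans (step n hn) (max_le (le_max_left _ _) ih)
  set K : ℝ := max B (A m) with hK
  have hlim : Filter.limsup (fun n => (A n : EReal)) Filter.atTop ≤ (K : EReal) := by
    apply Filter.limsup_le_of_le
    · isBoundedDefault
    · filter_upwards [eventually_ge_atTop (m : ℤ)] with n hn
      exact_mod_cast bound n hn
  exact lt_of_le_of_lt hlim (EReal.coe_lt_top K)
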